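/- If W and W₁, W₂, … are graphons with δ_□(W_m, W) → 0 as m → ∞, then limsup_{m→∞} Ent(W_m) ≤ Ent(W). -/

import Mathlib

open MeasureTheory Set Filter

noncomputable section

/-- A graphon: a symmetric measurable function `ℝ → ℝ → ℝ` with values in `[0,1]`
(only its values on `[0,1]²` matter). -/
def IsGraphon (W : ℝ → ℝ → ℝ) : Prop :=
  (∀ x y, W x y = W y x) ∧ Measurable (Function.uncurry W) ∧
    ∀ x y, W x y ∈ Set.Icc (0 : ℝ) 1

/-- The cut norm `‖U‖_□`, the supremum over measurable `S, T ⊆ [0,1]` of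
`|∫_{S×T} U|`. -/
def cutNorm (U : ℝ → ℝ → ℝ) : ℝ :=
  sSup { r : ℝ | ∃ S T : Set ℝ, MeasurableSet S ∧ MeasurableSet T ∧
    S ⊆ Set.Icc 0 1 ∧ T ⊆ Set.Icc 0 1 ∧
    r = |∫ p in S ×ˢ T, U p.1 p.2| }

/-- `d_□(W₁, W₂) = ‖W₁ - W₂‖_□`. -/
def dCut (W₁ W₂ : ℝ → ℝ → ℝ) : ℝ := cutNorm (fun x y => W₁ x y - W₂ x y)

/-- A Lebesgue-measure-preserving map `[0,1] → [0,1]`. -/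
def IsMPSelf (σ : ℝ → ℝ) : Prop :=
  MeasureTheory.MeasurePreserving σ
      (MeasureTheory.volume.restrict (Set.Icc (0:ℝ) 1))
      (MeasureTheory.volume.restrict (Set.Icc (0:ℝ) 1)) ∧
    Set.MapsTo σ (Set.Icc (0:ℝ) 1) (Set.Icc (0:ℝ) 1)

/-- The cut distance `δ_□(W₁, W₂)`. -/
def deltaCut (W₁ W₂ : ℝ → ℝ → ℝ) : ℝ :=
  sInf { r : ℝ | ∃ σ₁ σ₂ : ℝ → ℝ, IsMPSelf σ₁ ∧ IsMPSelf σ₂ ∧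
    r = cutNorm (fun x y => W₁ (σ₁ x) (σ₁ y) - W₂ (σ₂ x) (σ₂ y)) }

/-- The binary entropy function `h` (base-2 logarithm; `logb 2 0 = 0` by convention,
so `h 0 = h 1 = 0`). -/
def binEnt (x : ℝ) : ℝ := -x * Real.logb 2 x - (1 - x) * Real.logb 2 (1 - x)

/-- `h̃ x = h (min x (1/2))`. -/
def htilde (x : ℝ) : ℝ := binEnt (min x (1/2))

/-- The entropy `Ent(W) = ∫₀¹∫₀¹ h(W(x,y)) dx dy` of a graphon. -/
def graphonEnt (W : ℝ → ℝ → ℝ) : ℝ :=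
  ∫ x in Set.Icc (0:ℝ) 1, ∫ y in Set.Icc (0:ℝ) 1, binEnt (W x y)

open Classical in
/-- The graphon `W_G` of a simple graph `G` on `{1, …, n}` (vertices as `Fin n`,
vertex `i : Fin n` representing `i+1`): `W_G x y = 1` iff `⌈nx⌉⌈ny⌉ ∈ E(G)`. -/
def graphonOfGraph {n : ℕ} (G : SimpleGraph (Fin n)) : ℝ → ℝ → ℝ := fun x y =>
  if ∃ i j : Fin n, G.Adj i j ∧ ⌈(n : ℝ) * x⌉ = ((i : ℕ) : ℤ) + 1 ∧
      ⌈(n : ℝ) * y⌉ = ((j : ℕ) : ℤ) + 1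
  then 1 else 0

/-- A labelled graph class: a set of graphs on `{1,…,n}` for each `n`. -/
abbrev GraphClass := ∀ n : ℕ, Set (SimpleGraph (Fin n))

/-- A graph class is closed under relabelling by permutations. -/
def IsGraphClass (Q : GraphClass) : Prop :=
  ∀ (n : ℕ) (π : Equiv.Perm (Fin n)) (G : SimpleGraph (Fin n)),
    G ∈ Q n → G.comap ⇑π ∈ Q n

/-- A hereditary graph class: a graph class closed under taking induced subgraphs
(relabelled by the order-preserving bijection). -/
def IsHereditary (Q : GraphClass) : Prop :=
  IsGraphClass Q ∧
    ∀ (m n : ℕ) (f : Fin m → Fin n), StrictMono f →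
      ∀ G ∈ Q n, G.comap f ∈ Q m

/-- `Q̂`: the set of graphons which are limits (in cut distance) of sequences of graphs in
the class `Q` whose orders tend to infinity. -/
def limitSet (Q : GraphClass) : Set (ℝ → ℝ → ℝ) :=
  { W | IsGraphon W ∧
    ∃ (nk : ℕ → ℕ) (Gk : ∀ k, SimpleGraph (Fin (nk k))),
      (∀ k, Gk k ∈ Q (nk k)) ∧ Filter.Tendsto nk Filter.atTop Filter.atTop ∧
      Filter.Tendsto (fun k => deltaCut (graphonOfGraph (Gk k)) W) Filter.atTop (nhds 0) }

/-- `C(n,2) = n(n-1)/2` as a real number. -/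
def choose2 (n : ℕ) : ℝ := (n : ℝ) * ((n : ℝ) - 1) / 2

open Classical in
/-- The step function `E[W | P]` obtained by averaging `W` over the products of the
parts of the partition `P` of `[0,1]`. -/
def condExpPart {k : ℕ} (P : Fin k → Set ℝ) (W : ℝ → ℝ → ℝ) : ℝ → ℝ → ℝ := fun x y =>
  ∑ i : Fin k, ∑ j : Fin k,
    if x ∈ P i ∧ y ∈ P j then ⨍ p in (P i) ×ˢ (P j), W p.1 p.2 else 0

/-- `W̄_n`: the step function of `W` for the partition of `[0,1]` into `n` consecutive
intervals of length `1/n`. -/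
def barStep (n : ℕ) (W : ℝ → ℝ → ℝ) : ℝ → ℝ → ℝ :=
  condExpPart (fun i : Fin n => Set.Ioc (((i : ℕ) : ℝ)/n) ((((i : ℕ) : ℝ) + 1)/n)) W

/-- `N̂_□(n, δ; W)`: the number of graphs `G` on `{1,…,n}` with `d_□(W_G, W) ≤ δ`. -/
def NhatCut (n : ℕ) (δ : ℝ) (W : ℝ → ℝ → ℝ) : ℕ :=
  Nat.card {G : SimpleGraph (Fin n) // dCut (graphonOfGraph G) W ≤ δ}

/-- `N_□(n, δ; W)`: the number of graphs `G` on `{1,…,n}` with `δ_□(W_G, W) ≤ δ`. -/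
def NCut (n : ℕ) (δ : ℝ) (W : ℝ → ℝ → ℝ) : ℕ :=
  Nat.card {G : SimpleGraph (Fin n) // deltaCut (graphonOfGraph G) W ≤ δ}

open Classical in
/-- The induced density `p(F; W)` of a graph `F` on `{1,…,k}` in a graphon `W`. -/
def inducedDensity {k : ℕ} (F : SimpleGraph (Fin k)) (W : ℝ → ℝ → ℝ) : ℝ :=
  ∫ x : Fin k → ℝ in Set.univ.pi (fun _ : Fin k => Set.Icc (0:ℝ) 1),
    ∏ i : Fin k, ∏ j : Fin k,
      if i < j then (if F.Adj i j then W (x i) (x j) else 1 - W (x i) (x j)) else 1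

open Classical in
/-- The randomness support graphon `1_{rand(W)}` of `W`. -/
def randIndicator (W : ℝ → ℝ → ℝ) : ℝ → ℝ → ℝ := fun x y =>
  if 0 < W x y ∧ W x y < 1 then 1 else 0

/-- A kernel `U` is `K_r`-free if `∏_{i<j} U(x_i, x_j) = 0` for a.e. `x ∈ [0,1]^r`. -/
def KFree (r : ℕ) (U : ℝ → ℝ → ℝ) : Prop :=
  ∀ᵐ x ∂(MeasureTheory.volume.restrict (Set.univ.pi fun _ : Fin r => Set.Icc (0:ℝ) 1)),
    (∏ i : Fin r, ∏ j : Fin r, if i < j then U (x i) (x j) else 1) = 0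

open Classical in
/-- The graphon `W^{(r,s)}`: equal to `1/2` off the diagonal blocks, `1` on the first `s`
diagonal blocks `I_i × I_i`, and `0` on the remaining diagonal blocks. -/
def Wrs (r s : ℕ) : ℝ → ℝ → ℝ := fun x y =>
  if ∃ i j : Fin r, i ≠ j ∧ x ∈ Set.Ioc (((i:ℕ):ℝ)/r) ((((i:ℕ):ℝ)+1)/r) ∧
      y ∈ Set.Ioc (((j:ℕ):ℝ)/r) ((((j:ℕ):ℝ)+1)/r)
  then 1/2
  else if ∃ i : Fin r, (i:ℕ) < s ∧ x ∈ Set.Ioc (((i:ℕ):ℝ)/r) ((((i:ℕ):ℝ)+1)/r) ∧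
      y ∈ Set.Ioc (((i:ℕ):ℝ)/r) ((((i:ℕ):ℝ)+1)/r)
  then 1 else 0

/-- `E_r = ⋃_{i ≠ j} I_i × I_j` where `I_i`, `i = 1, …, r`, are the consecutive
intervals of length `1/r` in `[0,1]`. -/
def Er (r : ℕ) : Set (ℝ × ℝ) :=
  ⋃ (i : Fin r) (j : Fin r) (_ : i ≠ j),
    (Set.Ioc (((i:ℕ):ℝ)/r) ((((i:ℕ):ℝ)+1)/r)) ×ˢ (Set.Ioc (((j:ℕ):ℝ)/r) ((((j:ℕ):ℝ)+1)/r))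

/-- `R_r`: the set of graphons equal to `1/2` on `E_r` and `{0,1}`-valued elsewhere
on `[0,1]²`. -/
def Rset (r : ℕ) : Set (ℝ → ℝ → ℝ) :=
  { W | IsGraphon W ∧ (∀ p ∈ Er r, W p.1 p.2 = 1/2) ∧
      ∀ p ∈ ((Set.Icc (0:ℝ) 1) ×ˢ (Set.Icc (0:ℝ) 1)) \ Er r,
        W p.1 p.2 = 0 ∨ W p.1 p.2 = 1 }

/-- A graphon is random-free if it is `{0,1}`-valued a.e. on `[0,1]²`. -/
def IsRandomFree (W : ℝ → ℝ → ℝ) : Prop :=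
  ∀ᵐ p ∂(MeasureTheory.volume.restrict ((Set.Icc (0:ℝ) 1) ×ˢ (Set.Icc (0:ℝ) 1))),
    W (Prod.fst p) (Prod.snd p) = 0 ∨ W (Prod.fst p) (Prod.snd p) = 1


namespace S2
open MeasureTheory Set Filter Topology

lemma binEnt_eq (x : ℝ) : binEnt x = (Real.log 2)⁻¹ * Real.binEntropy x := by
  simp only [binEnt, Real.binEntropy, Real.logb, Real.log_inv]
  ring

lemma binEnt_continuous : Continuous binEnt := by
  simp only [funext binEnt_eq]
  exact continuous_const.mul Real.binEntropy_continuous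

lemma binEnt_concave : ConcaveOn ℝ (Icc (0:ℝ) 1) binEnt := by
  have h := (Real.strictConcave_binEntropy.concaveOn).smul
    (c := (Real.log 2)⁻¹) (by positivity)
  rw [show binEnt = fun x => (Real.log 2)⁻¹ • Real.binEntropy x from
    funext fun x => by simp [binEnt_eq, smul_eq_mul]]
  exact h

lemma binEnt_nonneg {x : ℝ} (h0 : 0 ≤ x) (h1 : x ≤ 1) : 0 ≤ binEnt x := by
  rw [binEnt_eq]
  have := Real.binEntropy_nonneg h0 h1
  positivity

lemma binEnt_bound : ∃ C : ℝ, 0 < C ∧ ∀ x ∈ Icc (0:ℝ) 1, |binEnt x| ≤ C := by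
  obtain ⟨C, hC⟩ := (isCompact_Icc (a := (0:ℝ)) (b := 1)).exists_bound_of_continuousOn
    binEnt_continuous.continuousOn
  exact ⟨max C 1, by positivity, fun x hx => le_trans (hC x hx) (le_max_left _ _)⟩

lemma binEnt_unifCont {ε : ℝ} (hε : 0 < ε) : ∃ δ > 0, ∀ a ∈ Icc (0:ℝ) 1, ∀ b ∈ Icc (0:ℝ) 1,
    |a - b| ≤ δ → |binEnt a - binEnt b| ≤ ε := by
  have h := (isCompact_Icc (a := (0:ℝ)) (b := 1)).uniformContinuousOn_of_continuous
    binEnt_continuous.continuousOn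
  rw [Metric.uniformContinuousOn_iff] at h
  obtain ⟨δ, hδ, hh⟩ := h ε hε
  refine ⟨δ/2, by positivity, fun a ha b hb hab => ?_⟩
  have := hh a ha b hb (by rw [Real.dist_eq]; linarith)
  rw [Real.dist_eq] at this; linarith

/-- the base measure on `[0,1]` -/

def mu : Measure ℝ := volume.restrict (Icc 0 1)
instance : IsProbabilityMeasure mu :=
  ⟨by simp [mu, Measure.restrict_apply_univ, Real.volume_Icc]⟩

def Pm : Measure (ℝ × ℝ) := mu.prod mu
instance : IsProbabilityMeasure Pm := by unfold Pm; infer_instance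

lemma Pm_eq_restrict : Pm = (volume : Measure (ℝ × ℝ)).restrict (Icc 0 1 ×ˢ Icc 0 1) := by
  rw [Pm, mu, Measure.prod_restrict, Measure.volume_eq_prod]

lemma integrable_of_mem_Icc {g : ℝ × ℝ → ℝ} (hg : Measurable g)
    (hmem : ∀ p, g p ∈ Icc (0:ℝ) 1) (ρ : Measure (ℝ × ℝ)) [IsFiniteMeasure ρ] :
    Integrable g ρ := by
  refine ⟨hg.aestronglyMeasurable, HasFiniteIntegral.of_bounded (C := 1) ?_⟩
  filter_upwards with p
  rw [Real.norm_eq_abs, abs_le]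
  exact ⟨by linarith [(hmem p).1], (hmem p).2⟩

lemma integrable_binEnt_comp {g : ℝ × ℝ → ℝ} (hg : Measurable g)
    (hmem : ∀ p, g p ∈ Icc (0:ℝ) 1) (ρ : Measure (ℝ × ℝ)) [IsFiniteMeasure ρ] :
    Integrable (fun p => binEnt (g p)) ρ := by
  obtain ⟨C, hC0, hC⟩ := binEnt_bound
  refine ⟨(binEnt_continuous.measurable.comp hg).aestronglyMeasurable,
    HasFiniteIntegral.of_bounded (C := C) ?_⟩
  filter_upwards with p
  exact hC _ (hmem p)

def In (n : ℕ) (i : Fin n) : Set ℝ := Ioc (((i:ℕ):ℝ)/(n:ℝ)) ((((i:ℕ):ℝ)+1)/(n:ℝ))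

lemma In_subset {n : ℕ} (i : Fin n) : In n i ⊆ Icc 0 1 := by
  have hn : (0:ℝ) < n := by exact_mod_cast i.pos
  intro x hx
  obtain ⟨h1, h2⟩ := hx
  constructor
  · have : (0:ℝ) ≤ ((i:ℕ):ℝ)/(n:ℝ) := by positivity
    linarith
  · have hi : ((i:ℕ):ℝ) + 1 ≤ (n:ℝ) := by exact_mod_cast i.isLt
    exact h2.trans ((div_le_one hn).mpr hi)

lemma In_measurable {n : ℕ} (i : Fin n) : MeasurableSet (In n i) := measurableSet_Ioc

lemma In_vol {n : ℕ} (i : Fin n) : volume (In n i) = ENNReal.ofReal (1/(n:ℝ)) := by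
  have hn : (0:ℝ) < n := by exact_mod_cast i.pos
  rw [In, Real.volume_Ioc]
  congr 1
  field_simp
  ring

lemma In_mu {n : ℕ} (i : Fin n) : mu (In n i) = ENNReal.ofReal (1/(n:ℝ)) := by
  rw [mu, Measure.restrict_apply (In_measurable i),
    Set.inter_eq_left.mpr (In_subset i), In_vol]

lemma In_disjoint {n : ℕ} {i j : Fin n} (hij : i ≠ j) : Disjoint (In n i) (In n j) := by
  have hn : (0:ℝ) < n := by exact_mod_cast i.pos
  rw [In, In, Set.Ioc_disjoint_Ioc]
  rcases lt_or_gt_of_ne (fun h => hij (Fin.ext h) : (i:ℕ) ≠ (j:ℕ)) with h | h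
  · refine le_trans (min_le_left _ _) (le_trans ?_ (le_max_right _ _))
    have hle : ((i:ℕ):ℝ) + 1 ≤ ((j:ℕ):ℝ) := by exact_mod_cast h
    gcongr
  · refine le_trans (min_le_right _ _) (le_trans ?_ (le_max_left _ _))
    have hle : ((j:ℕ):ℝ) + 1 ≤ ((i:ℕ):ℝ) := by exact_mod_cast h
    gcongr

/-- which interval a point of `(0,1]` belongs to -/

lemma In_mem_iff {n : ℕ} (hn : 1 ≤ n) {x : ℝ} (hx : x ∈ Ioc (0:ℝ) 1) (i : Fin n) :
    x ∈ In n i ↔ ((i:ℕ) : ℤ) = ⌈(n:ℝ) * x⌉ - 1 := by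
  have hn' : (0:ℝ) < n := by exact_mod_cast hn
  rw [In, Set.mem_Ioc]
  constructor
  · rintro ⟨ha, hb⟩
    rw [div_lt_iff₀ hn'] at ha
    rw [le_div_iff₀ hn'] at hb
    have c1 : ((i:ℕ):ℤ) < ⌈(n:ℝ) * x⌉ := Int.lt_ceil.mpr (by push_cast; linarith [ha])
    have c2 : ⌈(n:ℝ) * x⌉ ≤ ((i:ℕ):ℤ) + 1 := Int.ceil_le.mpr (by push_cast; linarith [hb])
    omega
  · intro h
    have c1 : ((i:ℕ):ℤ) < ⌈(n:ℝ) * x⌉ := by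
      have := Int.ceil_pos.mpr (show (0:ℝ) < (n:ℝ)*x by nlinarith [hx.1])
      omega
    have c2 : ⌈(n:ℝ) * x⌉ ≤ ((i:ℕ):ℤ) + 1 := by omega
    have d1 : ((i:ℕ):ℝ) < (n:ℝ) * x := by exact_mod_cast Int.lt_ceil.mp c1
    have d2 : (n:ℝ) * x ≤ ((i:ℕ):ℝ) + 1 := by
      have := Int.ceil_le.mp c2
      push_cast at this
      linarith
    constructor
    · rw [div_lt_iff₀ hn']; linarith
    · rw [le_div_iff₀ hn']; linarith

lemma In_union {n : ℕ} (hn : 1 ≤ n) : (⋃ i : Fin n, In n i) = Ioc (0:ℝ) 1 := by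
  have hn' : (0:ℝ) < n := by exact_mod_cast hn
  ext x
  simp only [mem_iUnion]
  constructor
  · rintro ⟨i, hx⟩
    exact ⟨lt_of_le_of_lt (by positivity) hx.1, ((In_subset i) hx).2⟩
  · intro hx
    have h1 : (0:ℝ) < (n:ℝ) * x := by nlinarith [hx.1]
    have hceil : 1 ≤ ⌈(n:ℝ) * x⌉ := by
      have := Int.ceil_pos.mpr h1
      omega
    have hle : ⌈(n:ℝ) * x⌉ ≤ (n:ℤ) := Int.ceil_le.mpr (by
      push_cast; nlinarith [hx.2])
    have hlt : (⌈(n:ℝ) * x⌉ - 1).toNat < n := by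
      omega
    refine ⟨⟨(⌈(n:ℝ) * x⌉ - 1).toNat, hlt⟩, ?_⟩
    rw [In_mem_iff hn hx]
    simp only []
    rw [Int.toNat_of_nonneg (by omega)]

lemma msrable_comp {U : ℝ → ℝ → ℝ} (hU : IsGraphon U) {σ : ℝ → ℝ} (hσ : IsMPSelf σ) :
    Measurable fun p : ℝ × ℝ => U (σ p.1) (σ p.2) := by
  have : (fun p : ℝ × ℝ => U (σ p.1) (σ p.2)) =
      Function.uncurry U ∘ Prod.map σ σ := rfl
  rw [this]
  exact hU.2.1.comp (Measurable.prodMap hσ.1.measurable hσ.1.measurable)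

lemma graphonEnt_eq {W : ℝ → ℝ → ℝ} (hW : IsGraphon W) :
    graphonEnt W = ∫ p, binEnt (W p.1 p.2) ∂Pm := by
  rw [graphonEnt]
  have hint : Integrable (Function.uncurry fun x y => binEnt (W x y)) (mu.prod mu) := by
    have : (Function.uncurry fun x y => binEnt (W x y)) =
        fun p : ℝ × ℝ => binEnt (W p.1 p.2) := rfl
    rw [this]
    exact integrable_binEnt_comp hW.2.1 (fun p => hW.2.2 _ _) _
  exact integral_integral hint

/-- entropy invariance under measure-preserving maps, product integral form -/

lemma integral_comp_mp {σ : ℝ → ℝ} (hσ : IsMPSelf σ) (f : ℝ × ℝ → ℝ)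
    (hf : AEStronglyMeasurable f Pm) :
    ∫ p, f (σ p.1, σ p.2) ∂Pm = ∫ p, f p ∂Pm := by
  have hT : MeasurePreserving (Prod.map σ σ) Pm Pm := hσ.1.prod hσ.1
  conv_rhs => rw [← hT.map_eq]
  rw [integral_map hT.measurable.aemeasurable (by rwa [hT.map_eq])]
  rfl

/-- pushing a box integral through σ×σ -/

lemma setIntegral_box_preimage {σ : ℝ → ℝ} (hσ : IsMPSelf σ) (f : ℝ × ℝ → ℝ)
    (hf : Measurable f) {A B : Set ℝ} (hA : MeasurableSet A) (hB : MeasurableSet B) :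
    ∫ p in (σ ⁻¹' A) ×ˢ (σ ⁻¹' B), f (σ p.1, σ p.2) ∂Pm = ∫ p in A ×ˢ B, f p ∂Pm := by
  have hT : MeasurePreserving (Prod.map σ σ) Pm Pm := hσ.1.prod hσ.1
  have h1 : Pm.restrict (A ×ˢ B) = ((Pm.map (Prod.map σ σ)).restrict (A ×ˢ B)) := by
    rw [hT.map_eq]
  calc ∫ p in (σ ⁻¹' A) ×ˢ (σ ⁻¹' B), f (σ p.1, σ p.2) ∂Pm
      = ∫ p in Prod.map σ σ ⁻¹' (A ×ˢ B), (f ∘ Prod.map σ σ) p ∂Pm := by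
        congr 1
      _ = ∫ p in A ×ˢ B, f p ∂Pm := by
        have h2 : Pm.restrict (A ×ˢ B)
            = Measure.map (Prod.map σ σ) (Pm.restrict (Prod.map σ σ ⁻¹' (A ×ˢ B))) := by
          rw [← Measure.restrict_map hT.measurable (hA.prod hB), hT.map_eq]
        rw [show (∫ p in A ×ˢ B, f p ∂Pm) = ∫ p, f p ∂(Pm.restrict (A ×ˢ B)) from rfl, h2,
          integral_map hT.measurable.aemeasurable hf.aestronglyMeasurable]
        rfl

lemma mu_preimage {σ : ℝ → ℝ} (hσ : IsMPSelf σ) {A : Set ℝ} (hA : MeasurableSet A) :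
    mu (σ ⁻¹' A) = mu A := hσ.1.measure_preimage hA.nullMeasurableSet

/-- Jensen's inequality on a box -/

lemma jensen_box {g : ℝ × ℝ → ℝ} (hg : Measurable g) (hmem : ∀ p, g p ∈ Icc (0:ℝ) 1)
    {s : Set (ℝ × ℝ)} (hs : MeasurableSet s) (h0 : Pm s ≠ 0) :
    ∫ p in s, binEnt (g p) ∂Pm ≤ (Pm s).toReal * binEnt (⨍ p in s, g p ∂Pm) := by
  have hfin : Pm s ≠ ⊤ := measure_ne_top _ _
  have havg : (⨍ p in s, binEnt (g p) ∂Pm) ≤ binEnt (⨍ p in s, g p ∂Pm) := by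
    haveI : NeZero (Pm.restrict s) := ⟨by
      intro h
      apply h0
      rw [← Measure.restrict_apply_univ s, h, Measure.coe_zero, Pi.zero_apply]⟩
    refine ConcaveOn.le_map_average binEnt_concave binEnt_continuous.continuousOn
      isClosed_Icc ?_ ?_ ?_
    · filter_upwards with p using hmem p
    · exact (integrable_of_mem_Icc hg hmem _).restrict
    · exact (integrable_binEnt_comp hg hmem _).restrict
  have htr : (0:ℝ) < (Pm s).toReal := ENNReal.toReal_pos h0 hfin
  have := mul_le_mul_of_nonneg_left havg htr.le
  calc ∫ p in s, binEnt (g p) ∂Pm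
      = (Pm s).toReal * ⨍ p in s, binEnt (g p) ∂Pm := by
        rw [average_eq, measureReal_restrict_apply_univ, measureReal_def, smul_eq_mul, ← mul_assoc,
          mul_inv_cancel₀ htr.ne', one_mul]
      _ ≤ (Pm s).toReal * binEnt (⨍ p in s, g p ∂Pm) := this

def bavg (W : ℝ → ℝ → ℝ) (n : ℕ) (i j : Fin n) : ℝ :=
  ⨍ p in (In n i) ×ˢ (In n j), W p.1 p.2 ∂(volume : Measure (ℝ × ℝ))

def stepSum (W : ℝ → ℝ → ℝ) (n : ℕ) : ℝ :=
  ∑ i : Fin n, ∑ j : Fin n, (1/(n:ℝ)^2) * binEnt (bavg W n i j)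

def stepApprox (W : ℝ → ℝ → ℝ) (n : ℕ) (p : ℝ × ℝ) : ℝ :=
  ∑ i : Fin n, ∑ j : Fin n,
    Set.indicator ((In n i) ×ˢ (In n j)) (fun _ => binEnt (bavg W n i j)) p

lemma avg_mem' {g : ℝ × ℝ → ℝ} (hg : Measurable g) (hmem : ∀ p, g p ∈ Icc (0:ℝ) 1)
    {s : Set (ℝ × ℝ)} (ρ : Measure (ℝ × ℝ)) (h0 : ρ s ≠ 0) (hfin : ρ s ≠ ⊤) :
    (⨍ p in s, g p ∂ρ) ∈ Icc (0:ℝ) 1 := by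
  refine (convex_Icc (0:ℝ) 1).set_average_mem isClosed_Icc h0 hfin ?_ ?_
  · filter_upwards with p using hmem p
  · refine Measure.integrableOn_of_bounded hfin hg.aestronglyMeasurable (M := 1) ?_
    filter_upwards with p
    rw [Real.norm_eq_abs, abs_le]
    exact ⟨by linarith [(hmem p).1], (hmem p).2⟩

lemma box_vol {n : ℕ} (i j : Fin n) :
    (volume : Measure (ℝ × ℝ)) ((In n i) ×ˢ (In n j))
      = ENNReal.ofReal (1/(n:ℝ)) * ENNReal.ofReal (1/(n:ℝ)) := by
  rw [Measure.volume_eq_prod, Measure.prod_prod, In_vol, In_vol]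

lemma box_vol_ne_zero {n : ℕ} (i j : Fin n) :
    (volume : Measure (ℝ × ℝ)) ((In n i) ×ˢ (In n j)) ≠ 0 := by
  have hn : (0:ℝ) < n := by exact_mod_cast i.pos
  rw [box_vol]
  have : ENNReal.ofReal (1/(n:ℝ)) ≠ 0 := by
    rw [Ne, ENNReal.ofReal_eq_zero, not_le]
    positivity
  exact mul_ne_zero this this

lemma box_Pm {n : ℕ} (i j : Fin n) :
    Pm ((In n i) ×ˢ (In n j)) = ENNReal.ofReal (1/(n:ℝ)) * ENNReal.ofReal (1/(n:ℝ)) := by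
  rw [Pm, Measure.prod_prod, In_mu, In_mu]

lemma box_Pm_toReal {n : ℕ} (i j : Fin n) :
    (Pm ((In n i) ×ˢ (In n j))).toReal = 1/(n:ℝ)^2 := by
  have hn : (0:ℝ) < n := by exact_mod_cast i.pos
  rw [box_Pm, ENNReal.toReal_mul, ENNReal.toReal_ofReal (by positivity)]
  rw [sq]
  ring

lemma bavg_mem {W : ℝ → ℝ → ℝ} (hW : IsGraphon W) (n : ℕ) (i j : Fin n) :
    bavg W n i j ∈ Icc (0:ℝ) 1 := by
  refine avg_mem' hW.2.1 (fun p => hW.2.2 _ _) _ (box_vol_ne_zero i j) ?_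
  rw [box_vol]
  exact ENNReal.mul_ne_top ENNReal.ofReal_ne_top ENNReal.ofReal_ne_top

lemma integral_stepApprox (W : ℝ → ℝ → ℝ) (n : ℕ) :
    ∫ p, stepApprox W n p ∂Pm = stepSum W n := by
  unfold stepApprox stepSum
  rw [integral_finset_sum]
  swap
  · intro i _
    apply integrable_finset_sum
    intro j _
    exact (integrable_const _).indicator ((In_measurable i).prod (In_measurable j))
  refine Finset.sum_congr rfl (fun i _ => ?_)
  rw [integral_finset_sum]
  swap
  · intro j _
    exact (integrable_const _).indicator ((In_measurable i).prod (In_measurable j))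
  refine Finset.sum_congr rfl (fun j _ => ?_)
  rw [integral_indicator_const _ ((In_measurable i).prod (In_measurable j)),
    measureReal_def, box_Pm_toReal, smul_eq_mul]

lemma stepApprox_eval {W : ℝ → ℝ → ℝ} {n : ℕ} {p : ℝ × ℝ} {i j : Fin n}
    (hi : p.1 ∈ In n i) (hj : p.2 ∈ In n j) :
    stepApprox W n p = binEnt (bavg W n i j) := by
  unfold stepApprox
  rw [Finset.sum_eq_single i]
  · rw [Finset.sum_eq_single j]
    · rw [Set.indicator_of_mem (Set.mem_prod.mpr ⟨hi, hj⟩)]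
    · intro j' _ hj'
      refine Set.indicator_of_notMem (fun hmem => ?_) _
      exact (In_disjoint hj').ne_of_mem (Set.mem_prod.mp hmem).2 hj rfl
    · intro h; exact absurd (Finset.mem_univ j) h
  · intro i' _ hi'
    refine Finset.sum_eq_zero (fun j' _ => ?_)
    refine Set.indicator_of_notMem (fun hmem => ?_) _
    exact (In_disjoint hi').ne_of_mem (Set.mem_prod.mp hmem).1 hi rfl
  · intro h; exact absurd (Finset.mem_univ i) h

lemma ae_coords : ∀ᵐ p ∂Pm, p.1 ∈ Ioc (0:ℝ) 1 ∧ p.2 ∈ Ioc (0:ℝ) 1 := by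
  have hmuIoc : mu (Ioc (0:ℝ) 1) = 1 := by
    rw [mu, Measure.restrict_apply measurableSet_Ioc,
      Set.inter_eq_left.mpr Set.Ioc_subset_Icc_self, Real.volume_Ioc]
    norm_num
  have hcompl : mu (Ioc (0:ℝ) 1)ᶜ = 0 := by
    rw [measure_compl measurableSet_Ioc (measure_ne_top _ _), hmuIoc, measure_univ,
      tsub_self]
  have hset : Pm ((Ioc (0:ℝ) 1 ×ˢ Ioc (0:ℝ) 1)ᶜ) = 0 := by
    rw [Set.compl_prod_eq_union]
    refine le_antisymm (le_trans (measure_union_le _ _) ?_) zero_le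
    rw [Pm, Measure.prod_prod, Measure.prod_prod, hcompl]
    simp
  rw [MeasureTheory.ae_iff]
  refine measure_mono_null (fun p hp => ?_) hset
  intro hmem
  exact hp ⟨hmem.1, hmem.2⟩

lemma avg_Icc_eq_Ioc (f : ℝ × ℝ → ℝ) (a b a' b' : ℝ) :
    ⨍ p in Icc a b ×ˢ Icc a' b', f p ∂(volume : Measure (ℝ × ℝ))
      = ⨍ p in Ioc a b ×ˢ Ioc a' b', f p ∂(volume : Measure (ℝ × ℝ)) := by
  have hnull : (volume : Measure (ℝ × ℝ)) (({a} ×ˢ (univ : Set ℝ)) ∪ ((univ : Set ℝ) ×ˢ {a'})) = 0 := by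
    refine le_antisymm (le_trans (measure_union_le _ _) ?_) zero_le
    rw [Measure.volume_eq_prod, Measure.prod_prod, Measure.prod_prod]
    simp
  have h : (Icc a b ×ˢ Icc a' b' : Set (ℝ × ℝ)) =ᵐ[(volume : Measure (ℝ × ℝ))]
      (Ioc a b ×ˢ Ioc a' b') := by
    rw [MeasureTheory.ae_eq_set]
    constructor
    · refine measure_mono_null (fun p hp => ?_) hnull
      obtain ⟨⟨h1, h2⟩, h3⟩ := hp
      by_cases hlt : a < p.1
      · right
        refine ⟨Set.mem_univ _, ?_⟩
        have : p.2 ∉ Ioc a' b' := fun hmem => h3 ⟨⟨hlt, h1.2⟩, hmem⟩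
        have h4 : ¬ a' < p.2 := fun hlt' => this ⟨hlt', h2.2⟩
        simp only [Set.mem_singleton_iff]
        exact le_antisymm (not_lt.mp h4) h2.1
      · left
        exact ⟨le_antisymm (not_lt.mp hlt) h1.1, Set.mem_univ _⟩
    · rw [Set.diff_eq_empty.mpr (Set.prod_mono Ioc_subset_Icc_self Ioc_subset_Icc_self)]
      exact measure_empty
  show average ((volume : Measure (ℝ × ℝ)).restrict _) f
      = average ((volume : Measure (ℝ × ℝ)).restrict _) f
  rw [Measure.restrict_congr_set h]

lemma index_stuff {n : ℕ} (hn : 1 ≤ n) {x : ℝ} (hx : x ∈ Ioc (0:ℝ) 1) :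
    ∃ i : Fin n, x ∈ In n i ∧
      Metric.closedBall ((((⌈(n:ℝ)*x⌉:ℤ):ℝ) - 1/2)/(n:ℝ)) ((1/2)/(n:ℝ))
        = Icc ((((i:ℕ):ℝ))/(n:ℝ)) ((((i:ℕ):ℝ)+1)/(n:ℝ)) := by
  have hx' : x ∈ ⋃ i : Fin n, In n i := (In_union hn).symm ▸ hx
  obtain ⟨i, hi⟩ := Set.mem_iUnion.mp hx'
  have hidx : ((i:ℕ) : ℤ) = ⌈(n:ℝ) * x⌉ - 1 := (In_mem_iff hn hx i).mp hi
  have hidx' : ((⌈(n:ℝ)*x⌉:ℤ):ℝ) = ((i:ℕ):ℝ) + 1 := by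
    have : (⌈(n:ℝ)*x⌉ : ℤ) = ((i:ℕ) : ℤ) + 1 := by omega
    rw [this]; push_cast; ring
  have hn' : (0:ℝ) < n := by exact_mod_cast hn
  refine ⟨i, hi, ?_⟩
  rw [Real.closedBall_eq_Icc, hidx']
  congr 1
  all_goals field_simp
  all_goals try ring

lemma ae_tendsto_stepApprox {W : ℝ → ℝ → ℝ} (hW : IsGraphon W) :
    ∀ᵐ p ∂Pm, Tendsto (fun n => stepApprox W n p) atTop (𝓝 (binEnt (W p.1 p.2))) := by
  have hloc : LocallyIntegrable (fun p : ℝ × ℝ => W p.1 p.2) volume := by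
    rw [locallyIntegrable_iff]
    intro k hk
    refine Measure.integrableOn_of_bounded hk.measure_lt_top.ne
      hW.2.1.aestronglyMeasurable (M := 1) ?_
    filter_upwards with p
    rw [Real.norm_eq_abs, abs_le]
    exact ⟨by linarith [(hW.2.2 p.1 p.2).1], (hW.2.2 p.1 p.2).2⟩
  have hdiff := IsUnifLocDoublingMeasure.ae_tendsto_average
    (μ := (volume : Measure (ℝ × ℝ))) hloc 1
  have hPmae := Pm_eq_restrict ▸ ae_restrict_of_ae hdiff
  filter_upwards [hPmae, ae_coords] with p hp hxy
  obtain ⟨hx, hy⟩ := hxy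
  have hδlim : Tendsto (fun n : ℕ => (1/2)/(n:ℝ)) atTop (𝓝[>] 0) := by
    rw [tendsto_nhdsWithin_iff]
    constructor
    · exact tendsto_const_div_atTop_nhds_zero_nat (1/2)
    · filter_upwards [eventually_ge_atTop 1] with n hn
      have hn' : (0:ℝ) < n := by exact_mod_cast hn
      exact div_pos one_half_pos hn'
  have hmem : ∀ᶠ n : ℕ in atTop, p ∈ Metric.closedBall
      (((((⌈(n:ℝ)*p.1⌉:ℤ):ℝ) - 1/2)/(n:ℝ), (((⌈(n:ℝ)*p.2⌉:ℤ):ℝ) - 1/2)/(n:ℝ)))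
      (1 * ((1/2)/(n:ℝ))) := by
    filter_upwards [eventually_ge_atTop 1] with n hn
    obtain ⟨i, hi, hIcc⟩ := index_stuff hn hx
    obtain ⟨j, hj, hIcc'⟩ := index_stuff hn hy
    rw [one_mul, ← _root_.closedBall_prod_same]
    exact ⟨by rw [hIcc]; exact Ioc_subset_Icc_self hi,
      by rw [hIcc']; exact Ioc_subset_Icc_self hj⟩
  have h1 := hp (fun n : ℕ => ((((⌈(n:ℝ)*p.1⌉:ℤ):ℝ) - 1/2)/(n:ℝ),
      (((⌈(n:ℝ)*p.2⌉:ℤ):ℝ) - 1/2)/(n:ℝ))) (fun n : ℕ => (1/2)/(n:ℝ)) hδlim hmem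
  have h2 := (binEnt_continuous.tendsto _).comp h1
  refine h2.congr' ?_
  filter_upwards [eventually_ge_atTop 1] with n hn
  obtain ⟨i, hi, hIcc⟩ := index_stuff hn hx
  obtain ⟨j, hj, hIcc'⟩ := index_stuff hn hy
  rw [stepApprox_eval hi hj]
  simp only [Function.comp_apply]
  rw [← _root_.closedBall_prod_same, hIcc, hIcc']
  congr 1
  rw [avg_Icc_eq_Ioc]
  rfl

lemma stepSum_tendsto {W : ℝ → ℝ → ℝ} (hW : IsGraphon W) :
    Tendsto (fun n => stepSum W n) atTop (𝓝 (∫ p, binEnt (W p.1 p.2) ∂Pm)) := by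
  obtain ⟨C, hC0, hC⟩ := binEnt_bound
  have key := tendsto_integral_of_dominated_convergence (μ := Pm)
    (F := fun n => stepApprox W n) (f := fun p => binEnt (W p.1 p.2))
    (bound := fun _ => C) ?_ (integrable_const C) ?_ (ae_tendsto_stepApprox hW)
  · exact key.congr (fun n => integral_stepApprox W n)
  · intro n
    refine Measurable.aestronglyMeasurable ?_
    apply Finset.measurable_sum
    intro i _
    apply Finset.measurable_sum
    intro j _
    exact measurable_const.indicator ((In_measurable i).prod (In_measurable j))
  · intro n
    filter_upwards [ae_coords] with p hp
    obtain ⟨hx, hy⟩ := hp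
    rcases Nat.eq_zero_or_pos n with rfl | hn
    · simp [stepApprox]
      positivity
    · have hx' : p.1 ∈ ⋃ i : Fin n, In n i := (In_union hn).symm ▸ hx
      have hy' : p.2 ∈ ⋃ i : Fin n, In n i := (In_union hn).symm ▸ hy
      obtain ⟨i, hi⟩ := Set.mem_iUnion.mp hx'
      obtain ⟨j, hj⟩ := Set.mem_iUnion.mp hy'
      rw [stepApprox_eval hi hj, Real.norm_eq_abs]
      exact hC _ (bavg_mem hW n i j)

lemma mu_Ioc : mu (Ioc (0:ℝ) 1) = 1 := by
  rw [mu, Measure.restrict_apply measurableSet_Ioc,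
    Set.inter_eq_left.mpr Set.Ioc_subset_Icc_self, Real.volume_Ioc]
  norm_num

lemma restrict_vol_eq_Pm {S T : Set ℝ} (hS : MeasurableSet S) (hT : MeasurableSet T)
    (hS1 : S ⊆ Icc 0 1) (hT1 : T ⊆ Icc 0 1) :
    (volume : Measure (ℝ × ℝ)).restrict (S ×ˢ T) = Pm.restrict (S ×ˢ T) := by
  rw [Pm_eq_restrict, Measure.restrict_restrict (hS.prod hT),
    Set.inter_eq_left.mpr (Set.prod_mono hS1 hT1)]

lemma abs_setIntegral_le_cutNorm {U2 : ℝ → ℝ → ℝ} (hmeas : Measurable (Function.uncurry U2))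
    (hb : ∀ x y, |U2 x y| ≤ 1) {S T : Set ℝ} (hS : MeasurableSet S) (hT : MeasurableSet T)
    (hS1 : S ⊆ Icc 0 1) (hT1 : T ⊆ Icc 0 1) :
    |∫ p in S ×ˢ T, U2 p.1 p.2| ≤ cutNorm U2 := by
  apply le_csSup
  · refine ⟨1, fun r hr => ?_⟩
    obtain ⟨S', T', hS', hT', hS1', hT1', rfl⟩ := hr
    have hvol : (volume : Measure (ℝ × ℝ)) (S' ×ˢ T') ≤ 1 := by
      calc (volume : Measure (ℝ × ℝ)) (S' ×ˢ T')
          ≤ (volume : Measure (ℝ × ℝ)) (Icc 0 1 ×ˢ Icc 0 1) :=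
            measure_mono (Set.prod_mono hS1' hT1')
        _ = 1 := by
            rw [Measure.volume_eq_prod, Measure.prod_prod, Real.volume_Icc]
            norm_num
    have := norm_setIntegral_le_of_norm_le_const (μ := (volume : Measure (ℝ × ℝ)))
      (f := fun p : ℝ × ℝ => U2 p.1 p.2) (C := 1) (lt_of_le_of_lt hvol ENNReal.one_lt_top)
      (fun p _ => by rw [Real.norm_eq_abs]; exact hb _ _)
    rw [Real.norm_eq_abs] at this
    refine this.trans ?_
    rw [one_mul]
    calc ((volume : Measure (ℝ × ℝ)) (S' ×ˢ T')).toReal ≤ (1 : ENNReal).toReal :=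
        ENNReal.toReal_mono (by norm_num) hvol
      _ = 1 := by norm_num
  · exact ⟨S, T, hS, hT, hS1, hT1, rfl⟩

lemma Pm_compl_prod_null {A : Set ℝ} (hA : MeasurableSet A) (h1 : mu A = 1) :
    Pm ((A ×ˢ A)ᶜ) = 0 := by
  have hcompl : mu Aᶜ = 0 := by
    rw [measure_compl hA (measure_ne_top _ _), h1, measure_univ, tsub_self]
  rw [Set.compl_prod_eq_union]
  refine le_antisymm (le_trans (measure_union_le _ _) ?_) zero_le
  rw [Pm, Measure.prod_prod, Measure.prod_prod, hcompl]
  simp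

lemma sq_toReal {n : ℕ} (hn : 1 ≤ n) :
    (ENNReal.ofReal (1/(n:ℝ)) * ENNReal.ofReal (1/(n:ℝ))).toReal = 1/(n:ℝ)^2 := by
  have hn' : (0:ℝ) < n := by exact_mod_cast hn
  rw [ENNReal.toReal_mul, ENNReal.toReal_ofReal (by positivity), sq]
  ring

lemma avg_eq_sq {n : ℕ} (hn : 1 ≤ n) {s : Set (ℝ × ℝ)}
    (h : (Pm s).toReal = 1/(n:ℝ)^2) (f : ℝ × ℝ → ℝ) :
    ⨍ p in s, f p ∂Pm = (n:ℝ)^2 * ∫ p in s, f p ∂Pm := by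
  rw [average_eq, measureReal_restrict_apply_univ, measureReal_def, h, smul_eq_mul, one_div, inv_inv]

/-- the key estimate -/

lemma keyG {W U : ℝ → ℝ → ℝ} (hW : IsGraphon W) (hU : IsGraphon U) {n : ℕ} (hn : 1 ≤ n)
    {ε δ : ℝ} (hε : 0 ≤ ε) (hδ : 0 < δ)
    (hcont : ∀ a ∈ Icc (0:ℝ) 1, ∀ b ∈ Icc (0:ℝ) 1, |a - b| ≤ δ → |binEnt a - binEnt b| ≤ ε)
    {σ₁ σ₂ : ℝ → ℝ} (h₁ : IsMPSelf σ₁) (h₂ : IsMPSelf σ₂)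
    (hcut : cutNorm (fun x y => U (σ₁ x) (σ₁ y) - W (σ₂ x) (σ₂ y)) ≤ δ/(n:ℝ)^2) :
    graphonEnt U ≤ stepSum W n + ε := by
  have hn' : (0:ℝ) < n := by exact_mod_cast hn
  have hofr : ENNReal.ofReal (1/(n:ℝ)) ≠ 0 := by
    rw [Ne, ENNReal.ofReal_eq_zero, not_le]; positivity
  -- the partition
  set Q : Fin n → Set ℝ := fun i => σ₂ ⁻¹' (In n i) ∩ Icc 0 1 with hQdef
  have hQmeas : ∀ i, MeasurableSet (Q i) :=
    fun i => ((In_measurable i).preimage h₂.1.measurable).inter measurableSet_Icc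
  have hQsub : ∀ i, Q i ⊆ Icc 0 1 := fun i => Set.inter_subset_right
  have hQdisj : ∀ {i j : Fin n}, i ≠ j → Disjoint (Q i) (Q j) := fun {i j} hij =>
    Disjoint.mono Set.inter_subset_left Set.inter_subset_left
      ((In_disjoint hij).preimage σ₂)
  have hQrestrict : ∀ i j, Pm.restrict (Q i ×ˢ Q j)
      = Pm.restrict ((σ₂ ⁻¹' (In n i)) ×ˢ (σ₂ ⁻¹' (In n j))) := by
    intro i j
    rw [Pm_eq_restrict, Measure.restrict_restrict ((hQmeas i).prod (hQmeas j)),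
      Measure.restrict_restrict
        (((In_measurable i).preimage h₂.1.measurable).prod
          ((In_measurable j).preimage h₂.1.measurable))]
    congr 1
    rw [hQdef]
    simp only [← Set.prod_inter_prod]
    rw [Set.inter_assoc, Set.inter_self]
  have hQmu : ∀ i, mu (Q i) = ENNReal.ofReal (1/(n:ℝ)) := by
    intro i
    have h1 : mu (Q i) = mu (σ₂ ⁻¹' (In n i)) := by
      rw [mu, Measure.restrict_apply (hQmeas i),
        Measure.restrict_apply ((In_measurable i).preimage h₂.1.measurable), hQdef]
      simp only [Set.inter_assoc, Set.inter_self]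
    rw [h1, mu_preimage h₂ (In_measurable i), In_mu]
  have hQPm : ∀ i j, Pm (Q i ×ˢ Q j) = ENNReal.ofReal (1/(n:ℝ)) * ENNReal.ofReal (1/(n:ℝ)) := by
    intro i j
    rw [Pm, Measure.prod_prod, hQmu, hQmu]
  have hQPm0 : ∀ i j, Pm (Q i ×ˢ Q j) ≠ 0 := by
    intro i j
    rw [hQPm]
    exact mul_ne_zero hofr hofr
  have hQPmtoReal : ∀ i j, (Pm (Q i ×ˢ Q j)).toReal = 1/(n:ℝ)^2 := by
    intro i j; rw [hQPm, sq_toReal hn]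
  -- the functions
  set g : ℝ × ℝ → ℝ := fun p => U (σ₁ p.1) (σ₁ p.2) with hgdef
  have hg : Measurable g := msrable_comp hU h₁
  have hgmem : ∀ p, g p ∈ Icc (0:ℝ) 1 := fun p => hU.2.2 _ _
  set wσ : ℝ × ℝ → ℝ := fun p => W (σ₂ p.1) (σ₂ p.2) with hwdef
  have hwσ : Measurable wσ := msrable_comp hW h₂
  have hwmem : ∀ p, wσ p ∈ Icc (0:ℝ) 1 := fun p => hW.2.2 _ _
  -- invariance
  have hstep1 : graphonEnt U = ∫ p, binEnt (g p) ∂Pm := by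
    rw [graphonEnt_eq hU,
      ← integral_comp_mp h₁ (fun p => binEnt (U p.1 p.2))
        (binEnt_continuous.measurable.comp hU.2.1).aestronglyMeasurable]
  -- split into boxes
  have hcup : mu (⋃ i, Q i) = 1 := by
    have hQu : (⋃ i, Q i) = σ₂ ⁻¹' (Ioc 0 1) ∩ Icc 0 1 := by
      rw [hQdef, ← Set.iUnion_inter, ← Set.preimage_iUnion, In_union hn]
    rw [hQu]
    have h1 : mu (σ₂ ⁻¹' (Ioc 0 1) ∩ Icc 0 1) = mu (σ₂ ⁻¹' (Ioc 0 1)) := by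
      rw [mu, Measure.restrict_apply (measurableSet_Ioc.preimage h₂.1.measurable),
        Measure.restrict_apply ((measurableSet_Ioc.preimage h₂.1.measurable).inter
          measurableSet_Icc)]
      simp only [Set.inter_assoc, Set.inter_self]
    rw [h1, mu_preimage h₂ measurableSet_Ioc, mu_Ioc]
  have hae : ((⋃ i, Q i) ×ˢ (⋃ i, Q i) : Set (ℝ × ℝ)) =ᵐ[Pm] univ := by
    rw [MeasureTheory.ae_eq_univ]
    exact Pm_compl_prod_null (MeasurableSet.iUnion hQmeas) hcup
  have hsplit : ∫ p, binEnt (g p) ∂Pm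
      = ∑ ij : Fin n × Fin n, ∫ p in Q ij.1 ×ˢ Q ij.2, binEnt (g p) ∂Pm := by
    rw [← setIntegral_univ, ← Measure.restrict_congr_set hae]
    have hun : ((⋃ i, Q i) ×ˢ (⋃ i, Q i) : Set (ℝ × ℝ))
        = ⋃ ij ∈ (Finset.univ : Finset (Fin n × Fin n)), Q ij.1 ×ˢ Q ij.2 := by
      ext p
      simp only [Set.mem_prod, Set.mem_iUnion, Finset.mem_univ, iUnion_true, Prod.exists]
      constructor
      · rintro ⟨⟨i, hi⟩, ⟨j, hj⟩⟩
        exact ⟨i, j, hi, hj⟩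
      · rintro ⟨i, j, hi, hj⟩
        exact ⟨⟨i, hi⟩, ⟨j, hj⟩⟩
    rw [hun, integral_biUnion_finset]
    · intro ij _
      exact (hQmeas ij.1).prod (hQmeas ij.2)
    · intro ij _ kl _ hne
      rw [Function.onFun, Set.disjoint_iff_inter_eq_empty, Set.prod_inter_prod]
      by_cases h : ij.1 = kl.1
      · have h2 : ij.2 ≠ kl.2 := fun h2 => hne (Prod.ext h h2)
        rw [Set.disjoint_iff_inter_eq_empty.mp (hQdisj h2), Set.prod_empty]
      · rw [Set.disjoint_iff_inter_eq_empty.mp (hQdisj h), Set.empty_prod]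
    · intro ij _
      exact (integrable_binEnt_comp hg hgmem Pm).integrableOn
  -- per-box estimate
  have hbox : ∀ ij : Fin n × Fin n, ∫ p in Q ij.1 ×ˢ Q ij.2, binEnt (g p) ∂Pm
      ≤ (1/(n:ℝ)^2) * (binEnt (bavg W n ij.1 ij.2) + ε) := by
    rintro ⟨i, j⟩
    have hjen := jensen_box hg hgmem ((hQmeas i).prod (hQmeas j)) (hQPm0 i j)
    rw [hQPmtoReal i j] at hjen
    refine hjen.trans ?_
    have haijmem : (⨍ p in Q i ×ˢ Q j, g p ∂Pm) ∈ Icc (0:ℝ) 1 :=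
      avg_mem' hg hgmem Pm (hQPm0 i j) (measure_ne_top _ _)
    have hInPm0 : Pm (In n i ×ˢ In n j) ≠ 0 := by
      rw [Pm, Measure.prod_prod, In_mu, In_mu]
      exact mul_ne_zero hofr hofr
    have hbPm : bavg W n i j = ⨍ p in In n i ×ˢ In n j, W p.1 p.2 ∂Pm := by
      rw [bavg, restrict_vol_eq_Pm (In_measurable i) (In_measurable j)
        (In_subset i) (In_subset j)]
    have hbavgmem : bavg W n i j ∈ Icc (0:ℝ) 1 := by
      rw [hbPm]
      exact avg_mem' hW.2.1 (fun p => hW.2.2 _ _) Pm hInPm0 (measure_ne_top _ _)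
    -- difference of averages
    have hdiff : |(⨍ p in Q i ×ˢ Q j, g p ∂Pm) - bavg W n i j| ≤ δ := by
      have ha := avg_eq_sq hn (hQPmtoReal i j) g
      have hb := avg_eq_sq hn (box_Pm_toReal i j) (fun p : ℝ × ℝ => W p.1 p.2)
      have hpush : ∫ p in Q i ×ˢ Q j, wσ p ∂Pm
          = ∫ p in In n i ×ˢ In n j, W p.1 p.2 ∂Pm := by
        have hkey := setIntegral_box_preimage h₂ (fun p : ℝ × ℝ => W p.1 p.2) hW.2.1
          (In_measurable i) (In_measurable j)
        rw [← hkey]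
        show ∫ p, wσ p ∂(Pm.restrict _) = ∫ p, wσ p ∂(Pm.restrict _)
        rw [hQrestrict i j]
      have hint_g := (integrable_of_mem_Icc hg hgmem Pm).integrableOn
        (s := Q i ×ˢ Q j)
      have hint_w := (integrable_of_mem_Icc hwσ hwmem Pm).integrableOn
        (s := Q i ×ˢ Q j)
      have hsub : ∫ p in Q i ×ˢ Q j, g p ∂Pm - ∫ p in Q i ×ˢ Q j, wσ p ∂Pm
          = ∫ p in Q i ×ˢ Q j, (g p - wσ p) ∂Pm := (integral_sub hint_g hint_w).symm
      have hmeasD : Measurable (Function.uncurry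
          fun x y => U (σ₁ x) (σ₁ y) - W (σ₂ x) (σ₂ y)) := by
        show Measurable fun p : ℝ × ℝ => g p - wσ p
        exact hg.sub hwσ
      have hbD : ∀ x y, |U (σ₁ x) (σ₁ y) - W (σ₂ x) (σ₂ y)| ≤ 1 := by
        intro x y
        have h1 := hU.2.2 (σ₁ x) (σ₁ y)
        have h2 := hW.2.2 (σ₂ x) (σ₂ y)
        rw [abs_le]
        exact ⟨by linarith [h1.1, h2.2], by linarith [h1.2, h2.1]⟩
      have hcn : |∫ p in Q i ×ˢ Q j, (g p - wσ p) ∂Pm| ≤ δ/(n:ℝ)^2 := by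
        have heqv : ∫ p in Q i ×ˢ Q j, (g p - wσ p) ∂Pm
            = ∫ p in Q i ×ˢ Q j,
                (fun x y => U (σ₁ x) (σ₁ y) - W (σ₂ x) (σ₂ y)) p.1 p.2
                ∂(volume : Measure (ℝ × ℝ)) := by
          show ∫ p, (g p - wσ p) ∂(Pm.restrict _) = ∫ p, _ ∂((volume : Measure (ℝ × ℝ)).restrict _)
          rw [restrict_vol_eq_Pm (hQmeas i) (hQmeas j) (hQsub i) (hQsub j)]
        rw [heqv]
        exact (abs_setIntegral_le_cutNorm hmeasD hbD (hQmeas i) (hQmeas j)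
          (hQsub i) (hQsub j)).trans hcut
      rw [ha, hbPm, hb, ← hpush, ← mul_sub, hsub, abs_mul, abs_of_nonneg (by positivity :
        (0:ℝ) ≤ (n:ℝ)^2)]
      calc (n:ℝ)^2 * |∫ p in Q i ×ˢ Q j, (g p - wσ p) ∂Pm|
          ≤ (n:ℝ)^2 * (δ/(n:ℝ)^2) := by
            exact mul_le_mul_of_nonneg_left hcn (by positivity)
        _ = δ := by field_simp
    have hcc := hcont _ haijmem _ hbavgmem hdiff
    have h2 : binEnt (⨍ p in Q i ×ˢ Q j, g p ∂Pm) ≤ binEnt (bavg W n i j) + ε := by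
      have := abs_le.mp hcc
      linarith [this.2]
    exact mul_le_mul_of_nonneg_left h2 (by positivity)
  -- sum up
  rw [hstep1, hsplit]
  calc ∑ ij : Fin n × Fin n, ∫ p in Q ij.1 ×ˢ Q ij.2, binEnt (g p) ∂Pm
      ≤ ∑ ij : Fin n × Fin n, (1/(n:ℝ)^2) * (binEnt (bavg W n ij.1 ij.2) + ε) :=
        Finset.sum_le_sum (fun ij _ => hbox ij)
    _ = stepSum W n + ε := by
        have hexp : ∀ ij : Fin n × Fin n,
            (1/(n:ℝ)^2) * (binEnt (bavg W n ij.1 ij.2) + ε)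
              = (1/(n:ℝ)^2) * binEnt (bavg W n ij.1 ij.2) + (1/(n:ℝ)^2) * ε :=
          fun ij => by ring
        simp_rw [hexp]
        rw [Finset.sum_add_distrib, stepSum, Fintype.sum_prod_type, Finset.sum_const,
          Finset.card_univ]
        congr 1
        rw [Fintype.card_prod, Fintype.card_fin, nsmul_eq_mul]
        push_cast
        field_simp

lemma graphonEnt_nonneg {U : ℝ → ℝ → ℝ} (hU : IsGraphon U) : 0 ≤ graphonEnt U :=
  integral_nonneg fun x => integral_nonneg fun y =>
    binEnt_nonneg (hU.2.2 x y).1 (hU.2.2 x y).2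

lemma isMPSelf_id : IsMPSelf id := ⟨MeasurePreserving.id _, fun x hx => hx⟩

end S2

open S2 Filter MeasureTheory Set Topology in
/-- Lemma 3.3(ii): the entropy is upper semicontinuous with respect to
the cut distance. -/
theorem stmt2 (W : ℝ → ℝ → ℝ) (hW : IsGraphon W) (Wm : ℕ → (ℝ → ℝ → ℝ))
    (hWm : ∀ m, IsGraphon (Wm m))
    (hconv : Filter.Tendsto (fun m => deltaCut (Wm m) W) Filter.atTop (nhds 0)) :
    Filter.limsup (fun m => graphonEnt (Wm m)) Filter.atTop ≤ graphonEnt W := by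
  refine le_of_forall_pos_le_add (fun ε hε => ?_)
  have hεhalf : (0:ℝ) < ε/2 := by linarith
  obtain ⟨δ, hδ, hcont⟩ := binEnt_unifCont hεhalf
  have htend := stepSum_tendsto hW
  rw [← graphonEnt_eq hW] at htend
  obtain ⟨n, hnlt, hn1⟩ :=
    ((htend.eventually_lt_const (by linarith : graphonEnt W < graphonEnt W + ε/2)).and
      (eventually_ge_atTop 1)).exists
  have hn' : (0:ℝ) < n := by exact_mod_cast hn1
  have hpos : (0:ℝ) < δ/(n:ℝ)^2 := by positivity
  have h2 : ∀ᶠ m in atTop, deltaCut (Wm m) W < δ/(n:ℝ)^2 :=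
    hconv.eventually_lt_const hpos
  refine Filter.limsup_le_of_le ?_ ?_
  · refine Filter.IsBoundedUnder.isCoboundedUnder_le
      (u := fun m => graphonEnt (Wm m)) (l := atTop) ?_
    exact Filter.isBoundedUnder_of ⟨0, fun m => graphonEnt_nonneg (hWm m)⟩
  · filter_upwards [h2] with m hm
    have hne : {r : ℝ | ∃ σ₁ σ₂ : ℝ → ℝ, IsMPSelf σ₁ ∧ IsMPSelf σ₂ ∧
        r = cutNorm (fun x y => Wm m (σ₁ x) (σ₁ y) - W (σ₂ x) (σ₂ y))}.Nonempty :=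
      ⟨_, id, id, isMPSelf_id, isMPSelf_id, rfl⟩
    obtain ⟨r, hrmem, hrlt⟩ := exists_lt_of_csInf_lt hne hm
    obtain ⟨σ₁, σ₂, h₁, h₂, rfl⟩ := hrmem
    have hkey := keyG hW (hWm m) hn1 hεhalf.le hδ hcont h₁ h₂ hrlt.le
    calc graphonEnt (Wm m) ≤ stepSum W n + ε/2 := hkey
      _ ≤ graphonEnt W + ε := by linarith


end
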